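/- The least eigenvalue of the complement of B_1(n_1,n_2;κ) is the smallest root λ of the polynomial g(λ) = λ^4 + (2κ − n_1 n_2 − 1)λ^2 + κ^2 − (n_1+n_2)κ + n_1 n_2. -/

import Mathlib

open Classical in
/-- The adjacency matrix of a simple graph, with real entries. -/
noncomputable def adjMat {V : Type*} [Fintype V] (G : SimpleGraph V) : Matrix V V ℝ :=
  Matrix.of fun u v => if G.Adj u v then 1 else 0

/-- The least eigenvalue of a real matrix. -/
noncomputable def minEig {V : Type*} [Fintype V] (A : Matrix V V ℝ) : ℝ :=
  sInf {μ : ℝ | ∃ x : V → ℝ, x ≠ 0 ∧ A.mulVec x = μ • x}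

/-- `B1 n1 n2 κ` is the graph obtained from disjoint complete graphs `K_{n1}` and
`K_{n2}` by adding `κ` edges forming a matching between them (the `i`-th vertex of the
first clique is matched to the `i`-th vertex of the second, for `i < κ`). -/
def B1 (n1 n2 κ : ℕ) : SimpleGraph (Fin n1 ⊕ Fin n2) where
  Adj u v :=
    Sum.elim
      (fun a => Sum.elim (fun b : Fin n1 => a ≠ b) (fun b : Fin n2 => (a : ℕ) = (b : ℕ) ∧ (a : ℕ) < κ) v)
      (fun a => Sum.elim (fun b : Fin n1 => (b : ℕ) = (a : ℕ) ∧ (b : ℕ) < κ) (fun b : Fin n2 => a ≠ b) v) u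
  symm := ⟨by
    rintro (a | a) (b | b) h
    · exact h.symm
    · exact h
    · exact h
    · exact h.symm⟩
  loopless := ⟨by rintro (a | a) h <;> exact h rfl⟩

set_option linter.unusedSectionVars false
set_option maxHeartbeats 1000000

namespace B1aux


variable {n1 n2 κ : ℕ}

lemma adj_ll (i a : Fin n1) : adjMat ((B1 n1 n2 κ)ᶜ) (.inl i) (.inl a) = 0 := by
  have : ¬ ((B1 n1 n2 κ)ᶜ).Adj (.inl i) (.inl a) := by
    simp [B1, Functor.map, Sum.bind]
  simp [adjMat, this]

lemma adj_rr (i a : Fin n2) : adjMat ((B1 n1 n2 κ)ᶜ) (.inr i) (.inr a) = 0 := by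
  have : ¬ ((B1 n1 n2 κ)ᶜ).Adj (.inr i) (.inr a) := by
    simp [B1, Functor.map, Sum.bind, Fin.val_eq_val]
  simp [adjMat, this]

lemma adj_lr (i : Fin n1) (b : Fin n2) :
    adjMat ((B1 n1 n2 κ)ᶜ) (.inl i) (.inr b) =
      if ((i:ℕ) = (b:ℕ) ∧ (i:ℕ) < κ) then 0 else 1 := by
  have hadj : ((B1 n1 n2 κ)ᶜ).Adj (.inl i) (.inr b) ↔ ¬((i:ℕ) = (b:ℕ) ∧ (i:ℕ) < κ) := by
    simp [B1, Functor.map, Sum.bind]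
  simp only [adjMat, Matrix.of_apply, hadj]
  by_cases h : ((i:ℕ) = (b:ℕ) ∧ (i:ℕ) < κ)
  · rw [if_neg (not_not_intro h), if_pos h]
  · rw [if_pos h, if_neg h]

lemma adj_rl (j : Fin n2) (b : Fin n1) :
    adjMat ((B1 n1 n2 κ)ᶜ) (.inr j) (.inl b) =
      if ((b:ℕ) = (j:ℕ) ∧ (b:ℕ) < κ) then 0 else 1 := by
  have hadj : ((B1 n1 n2 κ)ᶜ).Adj (.inr j) (.inl b) ↔ ¬((b:ℕ) = (j:ℕ) ∧ (b:ℕ) < κ) := by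
    simp [B1, Functor.map, Sum.bind]
  simp only [adjMat, Matrix.of_apply, hadj]
  by_cases h : ((b:ℕ) = (j:ℕ) ∧ (b:ℕ) < κ)
  · rw [if_neg (not_not_intro h), if_pos h]
  · rw [if_pos h, if_neg h]

lemma filter_range (m : ℕ) (h : κ ≤ m) :
    (Finset.range m).filter (· < κ) = Finset.range κ := by
  ext k; simp only [Finset.mem_filter, Finset.mem_range]; omega

lemma sum_range_ite (m : ℕ) (h : κ ≤ m) (f : ℕ → ℝ) :
    ∑ k ∈ Finset.range m, (if k < κ then f k else 0) = ∑ k ∈ Finset.range κ, f k := by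
  rw [← Finset.sum_filter, filter_range m h]

lemma sum_range_const_ite (m : ℕ) (h : κ ≤ m) (c d : ℝ) :
    ∑ k ∈ Finset.range m, (if k < κ then c else d) = κ * c + ((m:ℝ) - κ) * d := by
  have hk : ∀ k, (if k < κ then c else d) = (if k < κ then c - d else 0) + d := by
    intro k; split <;> ring
  simp_rw [hk, Finset.sum_add_distrib, Finset.sum_const]
  rw [← Finset.sum_filter, filter_range m h]
  simp [Finset.sum_const]
  ring

/-- mulVec formula at a left vertex. -/
lemma mulVec_inl (h2 : κ ≤ n2) (x : Fin n1 ⊕ Fin n2 → ℝ) (i : Fin n1) :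
    (adjMat ((B1 n1 n2 κ)ᶜ)).mulVec x (.inl i) =
      (∑ b : Fin n2, x (.inr b)) -
        (if h : (i:ℕ) < κ then x (.inr ⟨i, h.trans_le h2⟩) else 0) := by
  rw [Matrix.mulVec, dotProduct, Fintype.sum_sum_type]
  have h0 : ∀ a : Fin n1, adjMat ((B1 n1 n2 κ)ᶜ) (.inl i) (.inl a) * x (.inl a) = 0 := by
    intro a; rw [adj_ll]; ring
  rw [Finset.sum_congr rfl (fun a _ => h0 a), Finset.sum_const, smul_zero, zero_add]
  have h1 : ∀ b : Fin n2, adjMat ((B1 n1 n2 κ)ᶜ) (.inl i) (.inr b) * x (.inr b)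
      = x (.inr b) - (if ((i:ℕ) = (b:ℕ) ∧ (i:ℕ) < κ) then x (.inr b) else 0) := by
    intro b; rw [adj_lr]; split <;> ring
  rw [Finset.sum_congr rfl (fun b _ => h1 b), Finset.sum_sub_distrib]
  congr 1
  by_cases hi : (i:ℕ) < κ
  · rw [dif_pos hi]
    rw [Finset.sum_eq_single (⟨(i:ℕ), hi.trans_le h2⟩ : Fin n2)]
    · rw [if_pos ⟨rfl, hi⟩]
    · intro b _ hb
      rw [if_neg]
      rintro ⟨hv, -⟩
      exact hb (by ext; exact hv.symm)
    · intro hmem; exact (hmem (Finset.mem_univ _)).elim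
  · rw [dif_neg hi]
    apply Finset.sum_eq_zero
    intro b _
    rw [if_neg]
    rintro ⟨-, hlt⟩; exact hi hlt

/-- mulVec formula at a right vertex. -/
lemma mulVec_inr (h12 : κ ≤ n1) (x : Fin n1 ⊕ Fin n2 → ℝ) (j : Fin n2) :
    (adjMat ((B1 n1 n2 κ)ᶜ)).mulVec x (.inr j) =
      (∑ b : Fin n1, x (.inl b)) -
        (if h : (j:ℕ) < κ then x (.inl ⟨j, h.trans_le h12⟩) else 0) := by
  rw [Matrix.mulVec, dotProduct, Fintype.sum_sum_type]
  have h0 : ∀ a : Fin n2, adjMat ((B1 n1 n2 κ)ᶜ) (.inr j) (.inr a) * x (.inr a) = 0 := by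
    intro a; rw [adj_rr]; ring
  rw [Finset.sum_congr rfl (fun a _ => h0 a), Finset.sum_const, smul_zero, add_zero]
  have h1 : ∀ b : Fin n1, adjMat ((B1 n1 n2 κ)ᶜ) (.inr j) (.inl b) * x (.inl b)
      = x (.inl b) - (if ((b:ℕ) = (j:ℕ) ∧ (b:ℕ) < κ) then x (.inl b) else 0) := by
    intro b; rw [adj_rl]; split <;> ring
  rw [Finset.sum_congr rfl (fun b _ => h1 b), Finset.sum_sub_distrib]
  congr 1
  by_cases hj : (j:ℕ) < κ
  · rw [dif_pos hj]
    rw [Finset.sum_eq_single (⟨(j:ℕ), hj.trans_le h12⟩ : Fin n1)]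
    · rw [if_pos ⟨rfl, hj⟩]
    · intro b _ hb
      rw [if_neg]
      rintro ⟨hv, -⟩
      exact hb (by ext; exact hv)
    · intro hmem; exact (hmem (Finset.mem_univ _)).elim
  · rw [dif_neg hj]
    apply Finset.sum_eq_zero
    intro b _
    rw [if_neg]
    rintro ⟨hv, hlt⟩
    exact hj (hv ▸ hlt)



noncomputable def Pr (n1 n2 κ : ℕ) : ℝ := (n1:ℝ)*n2 + 1 - 2*κ
noncomputable def qr (n1 n2 κ : ℕ) : ℝ := ((n1:ℝ)-κ)*((n2:ℝ)-κ)
noncomputable def tmax (n1 n2 κ : ℕ) : ℝ :=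
  (Pr n1 n2 κ + Real.sqrt ((Pr n1 n2 κ)^2 - 4*qr n1 n2 κ))/2

noncomputable def lam0 (n1 n2 κ : ℕ) : ℝ := -Real.sqrt (tmax n1 n2 κ)

variable {N1 N2 K : ℝ}

lemma Dnn (hK : 1 ≤ K) (h2 : K ≤ N2) (h1 : N2 ≤ N1) :
    0 ≤ (N1*N2 + 1 - 2*K)^2 - 4*((N1-K)*(N2-K)) := by
  have hu : (0:ℝ) ≤ N1 - K := by linarith
  have hv : (0:ℝ) ≤ N2 - K := by linarith
  set u := N1 - K with hu'
  set v := N2 - K with hv'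
  have hbase : N1*N2 + 1 - 2*K = u*v + K*(u+v) + (K-1)^2 := by rw [hu', hv']; ring
  rw [hbase]
  have hw : (0:ℝ) ≤ u*v + u + v := by positivity
  have hb2 : u*v + u + v ≤ u*v + K*(u+v) + (K-1)^2 := by
    nlinarith [mul_nonneg (sub_nonneg.2 hK) (add_nonneg hu hv), sq_nonneg (K-1)]
  have h4 : 4*(u*v) ≤ (u*v+u+v)^2 := by
    nlinarith [sq_nonneg (u-v), mul_nonneg (mul_nonneg hu hv) (add_nonneg hu hv), sq_nonneg (u*v)]
  have hsq : (u*v+u+v)^2 ≤ (u*v + K*(u+v) + (K-1)^2)^2 := by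
    apply pow_le_pow_left₀ hw hb2
  linarith

lemma Pnn (hK : 1 ≤ K) (h2 : K ≤ N2) (h1 : N2 ≤ N1) : 0 ≤ N1*N2 + 1 - 2*K := by
  nlinarith [sq_nonneg (K-1)]

variable {n1 n2 κ : ℕ}

section withH
variable (h1 : n2 ≤ n1) (h2 : κ ≤ n2) (h3 : 1 ≤ κ)
include h1 h2 h3

lemma castK : (1:ℝ) ≤ (κ:ℝ) := by exact_mod_cast h3
lemma castKN2 : (κ:ℝ) ≤ (n2:ℝ) := by exact_mod_cast h2
lemma castN21 : (n2:ℝ) ≤ (n1:ℝ) := by exact_mod_cast h1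

lemma Dnn' : 0 ≤ (Pr n1 n2 κ)^2 - 4*qr n1 n2 κ :=
  Dnn (castK h1 h2 h3) (castKN2 h1 h2 h3) (castN21 h1 h2 h3)

lemma Pnn' : 0 ≤ Pr n1 n2 κ :=
  Pnn (castK h1 h2 h3) (castKN2 h1 h2 h3) (castN21 h1 h2 h3)

lemma tmax_nonneg : 0 ≤ tmax n1 n2 κ := by
  have := Pnn' h1 h2 h3
  have := Real.sqrt_nonneg ((Pr n1 n2 κ)^2 - 4*qr n1 n2 κ)
  unfold tmax; linarith

lemma tmax_root : (tmax n1 n2 κ)^2 - Pr n1 n2 κ * tmax n1 n2 κ + qr n1 n2 κ = 0 := by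
  have hs : Real.sqrt ((Pr n1 n2 κ)^2 - 4*qr n1 n2 κ) ^ 2
      = (Pr n1 n2 κ)^2 - 4*qr n1 n2 κ := Real.sq_sqrt (Dnn' h1 h2 h3)
  unfold tmax
  linear_combination hs/4

lemma root_le_tmax (t' : ℝ) (h : t'^2 - Pr n1 n2 κ * t' + qr n1 n2 κ = 0) :
    t' ≤ tmax n1 n2 κ := by
  have hD : (2*t' - Pr n1 n2 κ)^2 = (Pr n1 n2 κ)^2 - 4*qr n1 n2 κ := by
    linear_combination 4*h
  have : 2*t' - Pr n1 n2 κ ≤ Real.sqrt ((Pr n1 n2 κ)^2 - 4*qr n1 n2 κ) := by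
    rw [← hD, Real.sqrt_sq_eq_abs]
    exact le_abs_self _
  unfold tmax; linarith

lemma lam0_eq : lam0 n1 n2 κ = -Real.sqrt (tmax n1 n2 κ) := rfl

lemma lam0_nonpos : lam0 n1 n2 κ ≤ 0 := by
  rw [lam0_eq h1 h2 h3]
  simp [Real.sqrt_nonneg]

lemma lam0_sq : (lam0 n1 n2 κ)^2 = tmax n1 n2 κ := by
  rw [lam0_eq h1 h2 h3, neg_pow, Real.sq_sqrt (tmax_nonneg h1 h2 h3)]
  ring

lemma lam0_le_of_sq_root (μ : ℝ)
    (h : (μ^2)^2 - Pr n1 n2 κ * μ^2 + qr n1 n2 κ = 0) : lam0 n1 n2 κ ≤ μ := by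
  have h1' : μ^2 ≤ tmax n1 n2 κ := root_le_tmax h1 h2 h3 _ h
  have h2' : Real.sqrt (μ^2) ≤ Real.sqrt (tmax n1 n2 κ) := Real.sqrt_le_sqrt h1'
  rw [Real.sqrt_sq_eq_abs] at h2'
  rw [lam0_eq h1 h2 h3]
  have := neg_abs_le μ
  linarith

lemma lam0_root :
    (lam0 n1 n2 κ)^4 + (2*(κ:ℝ) - (n1:ℝ)*(n2:ℝ) - 1) * (lam0 n1 n2 κ)^2
      + (κ:ℝ)^2 - ((n1:ℝ)+(n2:ℝ))*(κ:ℝ) + (n1:ℝ)*(n2:ℝ) = 0 := by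
  have h := tmax_root h1 h2 h3
  rw [← lam0_sq h1 h2 h3] at h
  unfold Pr qr at h
  linear_combination h

lemma lam0_le_of_quartic_root (μ : ℝ)
    (h : μ^4 + (2*(κ:ℝ) - (n1:ℝ)*(n2:ℝ) - 1) * μ^2
      + (κ:ℝ)^2 - ((n1:ℝ)+(n2:ℝ))*(κ:ℝ) + (n1:ℝ)*(n2:ℝ) = 0) : lam0 n1 n2 κ ≤ μ := by
  apply lam0_le_of_sq_root h1 h2 h3
  unfold Pr qr
  linear_combination h

lemma lam0_le_neg_one (hn1 : 2 ≤ n1) : lam0 n1 n2 κ ≤ -1 := by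
  have hK := castK h1 h2 h3
  have hKN2 := castKN2 h1 h2 h3
  have hN21 := castN21 h1 h2 h3
  have hn1' : (2:ℝ) ≤ (n1:ℝ) := by exact_mod_cast hn1
  have hf1 : (1:ℝ) - Pr n1 n2 κ + qr n1 n2 κ ≤ 0 := by
    unfold Pr qr
    nlinarith [mul_nonneg (by linarith : (0:ℝ) ≤ (κ:ℝ)) (by linarith : (0:ℝ) ≤ (n1:ℝ)+(n2:ℝ)-(κ:ℝ)-2)]
  have h1t : (1:ℝ) ≤ tmax n1 n2 κ := by
    have hD := Dnn' h1 h2 h3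
    have hcase : 2 - Pr n1 n2 κ ≤ Real.sqrt ((Pr n1 n2 κ)^2 - 4*qr n1 n2 κ) := by
      by_cases hc : 2 - Pr n1 n2 κ ≤ 0
      · exact hc.trans (Real.sqrt_nonneg _)
      · push_neg at hc
        rw [← Real.sqrt_sq (by linarith : (0:ℝ) ≤ 2 - Pr n1 n2 κ)]
        apply Real.sqrt_le_sqrt
        nlinarith
    unfold tmax; linarith
  rw [lam0_eq h1 h2 h3, neg_le_neg_iff]
  rw [show (1:ℝ) = Real.sqrt 1 from (Real.sqrt_one).symm]
  exact Real.sqrt_le_sqrt h1t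

end withH


lemma sum_fin_const_ite (m : ℕ) (h : κ ≤ m) (c d : ℝ) :
    ∑ j : Fin m, (if (j:ℕ) < κ then c else d) = κ * c + ((m:ℝ) - κ) * d := by
  rw [Fin.sum_univ_eq_sum_range (fun n => if n < κ then c else d) m]
  exact sum_range_const_ite m h c d

lemma eigen_structured (h1 : n2 ≤ n1) (h2 : κ ≤ n2)
    (lam a b c d : ℝ)
    (E1 : lam * a = ((κ:ℝ) - 1) * c + ((n2:ℝ) - κ) * d)
    (E2 : κ < n1 → lam * b = (κ:ℝ) * c + ((n2:ℝ) - κ) * d)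
    (E3 : lam * c = ((κ:ℝ) - 1) * a + ((n1:ℝ) - κ) * b)
    (E4 : κ < n2 → lam * d = (κ:ℝ) * a + ((n1:ℝ) - κ) * b) :
    (adjMat ((B1 n1 n2 κ)ᶜ)).mulVec
      (Sum.elim (fun i : Fin n1 => if (i:ℕ) < κ then a else b)
                (fun j : Fin n2 => if (j:ℕ) < κ then c else d))
      = lam • (Sum.elim (fun i : Fin n1 => if (i:ℕ) < κ then a else b)
                (fun j : Fin n2 => if (j:ℕ) < κ then c else d)) := by
  set x : Fin n1 ⊕ Fin n2 → ℝ :=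
    Sum.elim (fun i : Fin n1 => if (i:ℕ) < κ then a else b)
             (fun j : Fin n2 => if (j:ℕ) < κ then c else d) with hx
  have hxl : ∀ i : Fin n1, x (.inl i) = if (i:ℕ) < κ then a else b := fun _ => rfl
  have hxr : ∀ j : Fin n2, x (.inr j) = if (j:ℕ) < κ then c else d := fun _ => rfl
  have hsum2 : ∑ b' : Fin n2, x (.inr b') = κ * c + ((n2:ℝ) - κ) * d := by
    simp_rw [hxr]; exact sum_fin_const_ite n2 h2 c d
  have hsum1 : ∑ b' : Fin n1, x (.inl b') = κ * a + ((n1:ℝ) - κ) * b := by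
    simp_rw [hxl]; exact sum_fin_const_ite n1 (h2.trans h1) a b
  funext u
  cases u with
  | inl i =>
      rw [mulVec_inl h2 x i, Pi.smul_apply, smul_eq_mul, hxl i, hsum2]
      by_cases hi : (i:ℕ) < κ
      · rw [dif_pos hi, hxr, if_pos (show ((⟨(i:ℕ), hi.trans_le h2⟩ : Fin n2):ℕ) < κ from hi),
          if_pos hi]
        linarith [E1]
      · rw [dif_neg hi, if_neg hi, sub_zero]
        have hκn1 : κ < n1 := lt_of_le_of_lt (Nat.le_of_not_lt hi) i.isLt
        linarith [E2 hκn1]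
  | inr j =>
      rw [mulVec_inr (h2.trans h1) x j, Pi.smul_apply, smul_eq_mul, hxr j, hsum1]
      by_cases hj : (j:ℕ) < κ
      · rw [dif_pos hj, hxl,
          if_pos (show ((⟨(j:ℕ), hj.trans_le (h2.trans h1)⟩ : Fin n1):ℕ) < κ from hj),
          if_pos hj]
        linarith [E3]
      · rw [dif_neg hj, if_neg hj, sub_zero]
        have hκn2 : κ < n2 := lt_of_le_of_lt (Nat.le_of_not_lt hj) j.isLt
        linarith [E4 hκn2]

lemma lam0_mem (h1 : n2 ≤ n1) (h2 : κ ≤ n2) (h3 : 1 ≤ κ) :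
    ∃ x : Fin n1 ⊕ Fin n2 → ℝ, x ≠ 0 ∧
      (adjMat ((B1 n1 n2 κ)ᶜ)).mulVec x = lam0 n1 n2 κ • x := by
  have hK := castK h1 h2 h3
  have hKN2 := castKN2 h1 h2 h3
  have hN21 := castN21 h1 h2 h3
  set L := lam0 n1 n2 κ with hL
  have hL2 : L^2 = tmax n1 n2 κ := lam0_sq h1 h2 h3
  have hroot := tmax_root h1 h2 h3
  by_cases hκn2 : κ < n2
  -- generic case: all four classes nonempty
  · have hn2R : (κ:ℝ) < (n2:ℝ) := by exact_mod_cast hκn2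
    have hq : 0 < qr n1 n2 κ := by
      unfold qr; nlinarith
    have hP : 0 < Pr n1 n2 κ := by
      rcases lt_or_eq_of_le (Pnn' h1 h2 h3) with h | h
      · exact h
      · exfalso
        have hD := Dnn' h1 h2 h3
        nlinarith
    have ht : 0 < tmax n1 n2 κ := by
      have := Real.sqrt_nonneg ((Pr n1 n2 κ)^2 - 4*qr n1 n2 κ)
      unfold tmax; linarith
    have hLneg : L < 0 := by
      rw [hL, lam0_eq h1 h2 h3, neg_lt, neg_zero]
      exact Real.sqrt_pos.2 ht
    have hLne : L ≠ 0 := ne_of_lt hLneg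
    set t := tmax n1 n2 κ with htdef
    set c : ℝ := ((n1:ℝ)-1)*((n2:ℝ)-(κ:ℝ)) with hc
    set d : ℝ := t - (((κ:ℝ)-1)^2 + ((n1:ℝ)-(κ:ℝ))*(κ:ℝ)) with hd
    set a : ℝ := (((κ:ℝ)-1)*c + ((n2:ℝ)-(κ:ℝ))*d)/L with ha
    set b : ℝ := ((κ:ℝ)*c + ((n2:ℝ)-(κ:ℝ))*d)/L with hb
    have hPq : t^2 - ((n1:ℝ)*(n2:ℝ)+1-2*(κ:ℝ))*t + ((n1:ℝ)-(κ:ℝ))*((n2:ℝ)-(κ:ℝ)) = 0 := by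
      have := hroot; unfold Pr qr at this; linarith
    refine ⟨_, ?_, eigen_structured h1 h2 L a b c d ?_ ?_ ?_ ?_⟩
    · intro h0
      have hc0 : c ≠ 0 := by rw [hc]; nlinarith
      have := congrFun h0 (.inr ⟨0, lt_of_le_of_lt (Nat.zero_le κ) hκn2⟩)
      simp only [Sum.elim_inr, Pi.zero_apply] at this
      rw [if_pos (show ((⟨0, by omega⟩ : Fin n2) : ℕ) < κ from h3)] at this
      exact hc0 this
    · rw [ha]; field_simp
    · intro _; rw [hb]; field_simp
    · rw [ha, hb, hc, hd]
      field_simp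
      linear_combination (((n1:ℝ)-1)*((n2:ℝ)-(κ:ℝ))) * hL2
    · intro _
      rw [ha, hb, hc, hd]
      field_simp
      linear_combination hPq + d * hL2
  -- boundary case: κ = n2
  · have hκn2' : κ = n2 := le_antisymm h2 (Nat.le_of_not_lt hκn2)
    have hN2K : (n2:ℝ) = (κ:ℝ) := by exact_mod_cast hκn2'.symm
    have hq0 : qr n1 n2 κ = 0 := by unfold qr; rw [hN2K]; ring
    have hsqrtD : Real.sqrt ((Pr n1 n2 κ)^2 - 4*qr n1 n2 κ) = Pr n1 n2 κ := by
      rw [hq0]; ring_nf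
      exact Real.sqrt_sq (Pnn' h1 h2 h3)
    have htP : tmax n1 n2 κ = Pr n1 n2 κ := by
      unfold tmax; rw [hsqrtD]; ring
    by_cases hn1 : 2 ≤ n1
    · -- use a = κ-1, b = κ, c = L, d = 0
      have hn1R : (2:ℝ) ≤ (n1:ℝ) := by exact_mod_cast hn1
      have hPpos : 0 < Pr n1 n2 κ := by unfold Pr; rw [hN2K]; nlinarith
      have htpos : 0 < tmax n1 n2 κ := htP ▸ hPpos
      have hLneg : L < 0 := by
        rw [hL, lam0_eq h1 h2 h3, neg_lt, neg_zero]
        exact Real.sqrt_pos.2 htpos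
      refine ⟨_, ?_, eigen_structured h1 h2 L ((κ:ℝ)-1) (κ:ℝ) L 0 ?_ ?_ ?_ ?_⟩
      · intro h0
        have := congrFun h0 (.inr ⟨0, by omega⟩)
        simp only [Sum.elim_inr, Pi.zero_apply] at this
        rw [if_pos (show ((⟨0, by omega⟩ : Fin n2) : ℕ) < κ from h3)] at this
        exact (ne_of_lt hLneg) this
      · ring
      · intro _; ring
      · have hLP : L^2 = Pr n1 n2 κ := by rw [hL2, htP]
        unfold Pr at hLP
        linear_combination hLP + (n1:ℝ) * hN2K
      · intro h; omega
    · -- n1 = n2 = κ = 1, use the constant vector 1 with eigenvalue 0 = L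
      have hn1' : n1 = 1 := by omega
      have hn2' : n2 = 1 := by omega
      have hκ' : κ = 1 := by omega
      subst hn1' hn2' hκ'
      have hP0 : Pr 1 1 1 = 0 := by unfold Pr; norm_num
      have hL0 : L = 0 := by
        rw [hL, lam0_eq h1 h2 h3, htP, hP0, Real.sqrt_zero, neg_zero]
      refine ⟨_, ?_, eigen_structured h1 h2 L 1 1 1 1 ?_ ?_ ?_ ?_⟩
      · intro h0
        have := congrFun h0 (.inl ⟨0, by omega⟩)
        simp only [Sum.elim_inl, Pi.zero_apply] at this
        rw [if_pos (by norm_num)] at this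
        exact one_ne_zero this
      · rw [hL0]; norm_num
      · intro h; omega
      · rw [hL0]; norm_num
      · intro h; omega

lemma lam0_lb (h1 : n2 ≤ n1) (h2 : κ ≤ n2) (h3 : 1 ≤ κ) (μ : ℝ)
    (x : Fin n1 ⊕ Fin n2 → ℝ) (hx0 : x ≠ 0)
    (hx : (adjMat ((B1 n1 n2 κ)ᶜ)).mulVec x = μ • x) :
    lam0 n1 n2 κ ≤ μ := by
  have hκn1 : κ ≤ n1 := h2.trans h1
  set xl : ℕ → ℝ := fun k => if h : k < n1 then x (.inl ⟨k, h⟩) else 0 with hxl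
  set xr : ℕ → ℝ := fun k => if h : k < n2 then x (.inr ⟨k, h⟩) else 0 with hxr
  have hxlv : ∀ (k : ℕ) (h : k < n1), xl k = x (.inl ⟨k, h⟩) := fun k h => dif_pos h
  have hxrv : ∀ (k : ℕ) (h : k < n2), xr k = x (.inr ⟨k, h⟩) := fun k h => dif_pos h
  set T1 : ℝ := ∑ k ∈ Finset.range n1, xl k with hT1
  set T2 : ℝ := ∑ k ∈ Finset.range n2, xr k with hT2
  set Sa : ℝ := ∑ k ∈ Finset.range κ, xl k with hSa
  set Sc : ℝ := ∑ k ∈ Finset.range κ, xr k with hSc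
  have hsum2 : ∑ b : Fin n2, x (.inr b) = T2 := by
    rw [hT2, ← Fin.sum_univ_eq_sum_range]
    apply Finset.sum_congr rfl
    intro b _
    rw [hxrv (b:ℕ) b.isLt, Fin.eta]
  have hsum1 : ∑ b : Fin n1, x (.inl b) = T1 := by
    rw [hT1, ← Fin.sum_univ_eq_sum_range]
    apply Finset.sum_congr rfl
    intro b _
    rw [hxlv (b:ℕ) b.isLt, Fin.eta]
  have eqL : ∀ k, ∀ hk : k < n1, μ * xl k = T2 - (if k < κ then xr k else 0) := by
    intro k hk
    have h := congrFun hx (.inl ⟨k, hk⟩)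
    rw [mulVec_inl h2 x ⟨k, hk⟩, Pi.smul_apply, smul_eq_mul, hsum2] at h
    rw [hxlv k hk, ← h]
    congr 1
    by_cases hk' : k < κ
    · rw [if_pos hk', dif_pos (show ((⟨k, hk⟩ : Fin n1) : ℕ) < κ from hk'),
        hxrv k (hk'.trans_le h2)]
    · rw [if_neg hk', dif_neg (show ¬(((⟨k, hk⟩ : Fin n1) : ℕ) < κ) from hk')]
  have eqR : ∀ k, ∀ hk : k < n2, μ * xr k = T1 - (if k < κ then xl k else 0) := by
    intro k hk
    have h := congrFun hx (.inr ⟨k, hk⟩)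
    rw [mulVec_inr hκn1 x ⟨k, hk⟩, Pi.smul_apply, smul_eq_mul, hsum1] at h
    rw [hxrv k hk, ← h]
    congr 1
    by_cases hk' : k < κ
    · rw [if_pos hk', dif_pos (show ((⟨k, hk⟩ : Fin n2) : ℕ) < κ from hk'),
        hxlv k (hk'.trans_le hκn1)]
    · rw [if_neg hk', dif_neg (show ¬(((⟨k, hk⟩ : Fin n2) : ℕ) < κ) from hk')]
  have H1 : μ * Sa = κ * T2 - Sc := by
    rw [hSa, Finset.mul_sum]
    have hco : ∀ k ∈ Finset.range κ, μ * xl k = T2 - xr k := by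
      intro k hk
      rw [Finset.mem_range] at hk
      rw [eqL k (hk.trans_le hκn1), if_pos hk]
    rw [Finset.sum_congr rfl hco, Finset.sum_sub_distrib, Finset.sum_const,
      Finset.card_range, nsmul_eq_mul, hSc]
  have H3 : μ * Sc = κ * T1 - Sa := by
    rw [hSc, Finset.mul_sum]
    have hco : ∀ k ∈ Finset.range κ, μ * xr k = T1 - xl k := by
      intro k hk
      rw [Finset.mem_range] at hk
      rw [eqR k (hk.trans_le h2), if_pos hk]
    rw [Finset.sum_congr rfl hco, Finset.sum_sub_distrib, Finset.sum_const,
      Finset.card_range, nsmul_eq_mul, hSa]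
  have H2 : μ * T1 = n1 * T2 - Sc := by
    rw [hT1, Finset.mul_sum]
    have hco : ∀ k ∈ Finset.range n1, μ * xl k = T2 - (if k < κ then xr k else 0) := by
      intro k hk
      rw [Finset.mem_range] at hk
      exact eqL k hk
    rw [Finset.sum_congr rfl hco, Finset.sum_sub_distrib, Finset.sum_const,
      Finset.card_range, nsmul_eq_mul, sum_range_ite n1 hκn1, hSc]
  have H4 : μ * T2 = n2 * T1 - Sa := by
    rw [hT2, Finset.mul_sum]
    have hco : ∀ k ∈ Finset.range n2, μ * xr k = T1 - (if k < κ then xl k else 0) := by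
      intro k hk
      rw [Finset.mem_range] at hk
      exact eqR k hk
    rw [Finset.sum_congr rfl hco, Finset.sum_sub_distrib, Finset.sum_const,
      Finset.card_range, nsmul_eq_mul, sum_range_ite n2 h2, hSa]
  by_cases hμ0 : μ = 0
  · rw [hμ0]; exact lam0_nonpos h1 h2 h3
  by_cases hμ1 : μ^2 = 1
  · have hfac : (μ - 1) * (μ + 1) = 0 := by linear_combination hμ1
    rcases mul_eq_zero.1 hfac with h | h
    · have hone : μ = 1 := by linarith
      rw [hone]
      linarith [lam0_nonpos h1 h2 h3]
    · have hμm : μ = -1 := by linarith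
      by_cases hn1 : 2 ≤ n1
      · rw [hμm]; exact lam0_le_neg_one h1 h2 h3 hn1
      · exfalso
        have hn1' : n1 = 1 := by omega
        have hn2' : n2 = 1 := by omega
        have hκ' : κ = 1 := by omega
        subst hn1' hn2' hκ'
        have hT2' : T2 = xr 0 := by rw [hT2]; simp
        have hT1' : T1 = xl 0 := by rw [hT1]; simp
        have e1 := eqL 0 (by omega)
        have e2 := eqR 0 (by omega)
        rw [if_pos (show (0:ℕ) < 1 by omega), hT2', hμm] at e1
        rw [if_pos (show (0:ℕ) < 1 by omega), hT1', hμm] at e2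
        have hxl0 : xl 0 = 0 := by linarith
        have hxr0 : xr 0 = 0 := by linarith
        apply hx0
        funext u
        cases u with
        | inl i =>
            have hi : i = ⟨0, by omega⟩ := by ext; omega
            rw [hxlv 0 (by omega : (0:ℕ) < 1)] at hxl0
            rw [hi]; exact hxl0
        | inr j =>
            have hj : j = ⟨0, by omega⟩ := by ext; omega
            rw [hxrv 0 (by omega : (0:ℕ) < 1)] at hxr0
            rw [hj]; exact hxr0
  by_cases hST : Sa = 0 ∧ T1 = 0
  · exfalso
    obtain ⟨hSa0, hT10⟩ := hST
    have hSc0 : Sc = 0 := by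
      have hz : μ * Sc = 0 := by rw [hSa0, hT10] at H3; linarith
      exact (mul_eq_zero.1 hz).resolve_left hμ0
    have hT20 : T2 = 0 := by
      have hz : μ * T2 = 0 := by rw [hSa0, hT10] at H4; linarith
      exact (mul_eq_zero.1 hz).resolve_left hμ0
    have hne : μ^2 - 1 ≠ 0 := sub_ne_zero.2 hμ1
    have hlk : ∀ k, k < κ → xl k = 0 ∧ xr k = 0 := by
      intro k hk
      have e1 := eqL k (hk.trans_le hκn1)
      have e2 := eqR k (hk.trans_le h2)
      rw [if_pos hk, hT20, zero_sub] at e1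
      rw [if_pos hk, hT10, zero_sub] at e2
      have k1 : (μ^2 - 1) * xl k = 0 := by linear_combination μ * e1 - e2
      have k2 : (μ^2 - 1) * xr k = 0 := by linear_combination μ * e2 - e1
      exact ⟨(mul_eq_zero.1 k1).resolve_left hne, (mul_eq_zero.1 k2).resolve_left hne⟩
    have hxl0 : ∀ k, ∀ _ : k < n1, xl k = 0 := by
      intro k hk
      by_cases hk' : k < κ
      · exact (hlk k hk').1
      · have e := eqL k hk
        rw [if_neg hk', hT20, zero_sub, neg_zero] at e
        exact (mul_eq_zero.1 e).resolve_left hμ0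
    have hxr0 : ∀ k, ∀ _ : k < n2, xr k = 0 := by
      intro k hk
      by_cases hk' : k < κ
      · exact (hlk k hk').2
      · have e := eqR k hk
        rw [if_neg hk', hT10, zero_sub, neg_zero] at e
        exact (mul_eq_zero.1 e).resolve_left hμ0
    apply hx0
    funext u
    cases u with
    | inl i =>
        have h := hxl0 (i:ℕ) i.isLt
        rw [hxlv (i:ℕ) i.isLt, Fin.eta] at h
        exact h
    | inr j =>
        have h := hxr0 (j:ℕ) j.isLt
        rw [hxrv (j:ℕ) j.isLt, Fin.eta] at h
        exact h
  · push_neg at hST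
    have e1 : μ^2 * Sa = (1 - (κ:ℝ)) * Sa + (κ:ℝ)*((n2:ℝ)-1) * T1 := by
      linear_combination μ*H1 + (κ:ℝ)*H4 - H3
    have e2 : μ^2 * T1 = (1 - (n1:ℝ)) * Sa + ((n1:ℝ)*(n2:ℝ)-(κ:ℝ)) * T1 := by
      linear_combination μ*H2 + (n1:ℝ)*H4 - H3
    have fSa : ((μ^2)^2 - Pr n1 n2 κ * μ^2 + qr n1 n2 κ) * Sa = 0 := by
      unfold Pr qr
      linear_combination (μ^2 - ((n1:ℝ)*(n2:ℝ)-(κ:ℝ))) * e1 + ((κ:ℝ)*((n2:ℝ)-1)) * e2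
    have fT1 : ((μ^2)^2 - Pr n1 n2 κ * μ^2 + qr n1 n2 κ) * T1 = 0 := by
      unfold Pr qr
      linear_combination (1 - (n1:ℝ)) * e1 + (μ^2 - (1-(κ:ℝ))) * e2
    have froot : (μ^2)^2 - Pr n1 n2 κ * μ^2 + qr n1 n2 κ = 0 := by
      by_cases hSa0 : Sa = 0
      · have hT10 : T1 ≠ 0 := hST hSa0
        exact (mul_eq_zero.1 fT1).resolve_right hT10
      · exact (mul_eq_zero.1 fSa).resolve_right hSa0
    exact lam0_le_of_sq_root h1 h2 h3 μ froot

end B1aux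

/-- The least eigenvalue of the complement of `B1(n1, n2; κ)` is the smallest root of
the polynomial `g(λ) = λ⁴ + (2κ − n1·n2 − 1)λ² + κ² − (n1+n2)κ + n1·n2`. -/
theorem minEig_compl_B1_root (n1 n2 κ : ℕ) (h1 : n2 ≤ n1) (h2 : κ ≤ n2) (h3 : 1 ≤ κ) :
    (minEig (adjMat ((B1 n1 n2 κ)ᶜ)) ^ 4
        + (2 * (κ : ℝ) - (n1 : ℝ) * (n2 : ℝ) - 1) * minEig (adjMat ((B1 n1 n2 κ)ᶜ)) ^ 2
        + (κ : ℝ) ^ 2 - ((n1 : ℝ) + (n2 : ℝ)) * (κ : ℝ) + (n1 : ℝ) * (n2 : ℝ) = 0) ∧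
    (∀ μ : ℝ,
      μ ^ 4 + (2 * (κ : ℝ) - (n1 : ℝ) * (n2 : ℝ) - 1) * μ ^ 2
        + (κ : ℝ) ^ 2 - ((n1 : ℝ) + (n2 : ℝ)) * (κ : ℝ) + (n1 : ℝ) * (n2 : ℝ) = 0 →
      minEig (adjMat ((B1 n1 n2 κ)ᶜ)) ≤ μ) := by
  have hiL : IsLeast {μ : ℝ | ∃ x : (Fin n1 ⊕ Fin n2) → ℝ, x ≠ 0 ∧
      (adjMat ((B1 n1 n2 κ)ᶜ)).mulVec x = μ • x} (B1aux.lam0 n1 n2 κ) := by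
    constructor
    · exact B1aux.lam0_mem h1 h2 h3
    · rintro μ ⟨x, hx0, hx⟩
      exact B1aux.lam0_lb h1 h2 h3 μ x hx0 hx
  have hmin : minEig (adjMat ((B1 n1 n2 κ)ᶜ)) = B1aux.lam0 n1 n2 κ := hiL.csInf_eq
  rw [hmin]
  refine ⟨B1aux.lam0_root h1 h2 h3, fun μ hμ => B1aux.lam0_le_of_quartic_root h1 h2 h3 μ hμ⟩
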